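/- Let A ∈ ℝ^{m×n}, let H ∈ ℝ^{n×n} be symmetric positive definite, and let R_d ∈ ℝ^{m×m} be symmetric positive definite. Then every strictly negative eigenvalue μ of the symmetric matrix M = [[−H, Aᵀ],[A, R_d]] satisfies both μ ≤ −λ_min(H) and μ ≥ (1/2) ( (λ_min(R_d) − λ_max(H)) − [ (λ_max(H) + λ_min(R_d))² + 4 σ_max(A)² ]^{1/2} ). -/

import Mathlib

open Matrix

/-- Spectral norm (largest singular value) of a real matrix. -/
noncomputable def specNorm {m n : ℕ} (A : Matrix (Fin m) (Fin n) ℝ) : ℝ :=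
  Real.sqrt (⨆ i, (Matrix.isHermitian_mul_conjTranspose_self A).eigenvalues i)

private lemma quadForm_eq {k : ℕ} {B : Matrix (Fin k) (Fin k) ℝ} (hB : B.IsHermitian)
    (u : Fin k → ℝ) :
    u ⬝ᵥ (B *ᵥ u) = ∑ i, hB.eigenvalues i *
      ((star (hB.eigenvectorUnitary : Matrix (Fin k) (Fin k) ℝ) *ᵥ u) i)^2 := by
  conv_lhs => rw [hB.spectral_theorem, Unitary.conjStarAlgAut_apply]
  set U : Matrix (Fin k) (Fin k) ℝ := (hB.eigenvectorUnitary : Matrix (Fin k) (Fin k) ℝ) with hU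
  have hstar : star U = Uᵀ := by
    ext i j; simp [Matrix.star_eq_conjTranspose, Matrix.conjTranspose_apply]
  rw [← mulVec_mulVec, ← mulVec_mulVec, dotProduct_mulVec, ← mulVec_transpose, hstar]
  simp [dotProduct, mulVec_diagonal, RCLike.ofReal]
  exact Finset.sum_congr rfl (fun i _ => by ring)

private lemma normsq_eq {k : ℕ} {B : Matrix (Fin k) (Fin k) ℝ} (hB : B.IsHermitian)
    (u : Fin k → ℝ) :
    u ⬝ᵥ u = ∑ i, ((star (hB.eigenvectorUnitary : Matrix (Fin k) (Fin k) ℝ) *ᵥ u) i)^2 := by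
  set U : Matrix (Fin k) (Fin k) ℝ := (hB.eigenvectorUnitary : Matrix (Fin k) (Fin k) ℝ) with hU
  have hstar : star U = Uᵀ := by
    ext i j; simp [Matrix.star_eq_conjTranspose, Matrix.conjTranspose_apply]
  have h1 : U * star U = 1 := Matrix.mem_unitaryGroup_iff.mp hB.eigenvectorUnitary.2
  have key : (star U *ᵥ u) ⬝ᵥ (star U *ᵥ u) = u ⬝ᵥ ((U * star U) *ᵥ u) := by
    rw [← mulVec_mulVec, dotProduct_mulVec, ← mulVec_transpose, hstar, transpose_transpose,
      dotProduct_comm]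
  rw [show ∑ i, ((star U *ᵥ u) i)^2 = (star U *ᵥ u) ⬝ᵥ (star U *ᵥ u) by
      simp [dotProduct, pow_two],
    key, h1, one_mulVec]

private lemma rayleigh_le {k : ℕ} {B : Matrix (Fin k) (Fin k) ℝ} (hB : B.IsHermitian)
    (u : Fin k → ℝ) : u ⬝ᵥ (B *ᵥ u) ≤ (⨆ i, hB.eigenvalues i) * (u ⬝ᵥ u) := by
  rw [quadForm_eq hB u, normsq_eq hB u, Finset.mul_sum]
  exact Finset.sum_le_sum fun i _ =>
    mul_le_mul_of_nonneg_right (le_ciSup (Set.Finite.bddAbove (Set.finite_range _)) i)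
      (sq_nonneg _)

private lemma rayleigh_ge {k : ℕ} {B : Matrix (Fin k) (Fin k) ℝ} (hB : B.IsHermitian)
    (u : Fin k → ℝ) : (⨅ i, hB.eigenvalues i) * (u ⬝ᵥ u) ≤ u ⬝ᵥ (B *ᵥ u) := by
  rw [quadForm_eq hB u, normsq_eq hB u, Finset.mul_sum]
  exact Finset.sum_le_sum fun i _ =>
    mul_le_mul_of_nonneg_right (ciInf_le (Set.Finite.bddBelow (Set.finite_range _)) i)
      (sq_nonneg _)

private lemma dotProduct_self_nonneg' {k : ℕ} (u : Fin k → ℝ) : 0 ≤ u ⬝ᵥ u :=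
  Finset.sum_nonneg fun i _ => mul_self_nonneg _

private lemma specNorm_nonneg {m n : ℕ} (A : Matrix (Fin m) (Fin n) ℝ) : 0 ≤ specNorm A :=
  Real.sqrt_nonneg _

private lemma iSup_AAT_nonneg {m n : ℕ} (A : Matrix (Fin m) (Fin n) ℝ) :
    0 ≤ ⨆ i, (Matrix.isHermitian_mul_conjTranspose_self A).eigenvalues i := by
  cases isEmpty_or_nonempty (Fin m) with
  | inl h => rw [Real.iSup_of_isEmpty]
  | inr h =>
    obtain ⟨j⟩ := h
    exact le_trans ((Matrix.posSemidef_self_mul_conjTranspose A).eigenvalues_nonneg j)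
      (le_ciSup (Set.Finite.bddAbove (Set.finite_range _)) j)

private lemma specNorm_sq {m n : ℕ} (A : Matrix (Fin m) (Fin n) ℝ) :
    specNorm A ^ 2 = ⨆ i, (Matrix.isHermitian_mul_conjTranspose_self A).eigenvalues i :=
  Real.sq_sqrt (iSup_AAT_nonneg A)

private lemma dot_A_bound {m n : ℕ} (A : Matrix (Fin m) (Fin n) ℝ) (u : Fin n → ℝ)
    (v : Fin m → ℝ) :
    (u ⬝ᵥ (Aᵀ *ᵥ v))^2 ≤ specNorm A ^ 2 * (u ⬝ᵥ u) * (v ⬝ᵥ v) := by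
  set y := Aᵀ *ᵥ v with hy
  have cs : (u ⬝ᵥ y)^2 ≤ (u ⬝ᵥ u) * (y ⬝ᵥ y) := by
    simpa [dotProduct, pow_two] using
      Finset.sum_mul_sq_le_sq_mul_sq Finset.univ u y
  have hAH : Aᴴ = Aᵀ := by ext i j; simp [Matrix.conjTranspose_apply]
  have hyy : y ⬝ᵥ y = v ⬝ᵥ ((A * Aᴴ) *ᵥ v) := by
    rw [hy, dotProduct_mulVec, ← mulVec_transpose, transpose_transpose, mulVec_mulVec,
      dotProduct_comm, hAH]
  have hb : y ⬝ᵥ y ≤ specNorm A ^ 2 * (v ⬝ᵥ v) := by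
    rw [hyy, specNorm_sq]
    exact rayleigh_le (Matrix.isHermitian_mul_conjTranspose_self A) v
  calc (u ⬝ᵥ y)^2 ≤ (u ⬝ᵥ u) * (y ⬝ᵥ y) := cs
    _ ≤ (u ⬝ᵥ u) * (specNorm A ^ 2 * (v ⬝ᵥ v)) :=
        mul_le_mul_of_nonneg_left hb (dotProduct_self_nonneg' u)
    _ = specNorm A ^ 2 * (u ⬝ᵥ u) * (v ⬝ᵥ v) := by ring

private lemma neg_le_of_sq_le {x y : ℝ} (h : x^2 ≤ y^2) (hy : 0 ≤ y) : -y ≤ x := by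
  have h1 : |x| ≤ |y| := by
    have := Real.sqrt_le_sqrt h
    rwa [Real.sqrt_sq_eq_abs, Real.sqrt_sq_eq_abs] at this
  calc -y = -|y| := by rw [abs_of_nonneg hy]
    _ ≤ -|x| := neg_le_neg h1
    _ ≤ x := neg_abs_le x

set_option maxHeartbeats 1000000 in
theorem stmt_15 {m n : ℕ} (A : Matrix (Fin m) (Fin n) ℝ)
    (H : Matrix (Fin n) (Fin n) ℝ) (hH : H.PosDef)
    (Rd : Matrix (Fin m) (Fin m) ℝ) (hRd : Rd.PosDef)
    (M : Matrix (Fin n ⊕ Fin m) (Fin n ⊕ Fin m) ℝ)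
    (hMdef : M = Matrix.fromBlocks (-H) Aᵀ A Rd) :
    ∀ μ : ℝ, μ < 0 →
      ∀ x : Fin n ⊕ Fin m → ℝ, x ≠ 0 → M.mulVec x = μ • x →
      (μ ≤ -(⨅ i, hH.1.eigenvalues i)) ∧
      ((1 / 2) * (((⨅ i, hRd.1.eigenvalues i) - ⨆ i, hH.1.eigenvalues i) -
        Real.sqrt (((⨆ i, hH.1.eigenvalues i) + ⨅ i, hRd.1.eigenvalues i) ^ 2 +
          4 * specNorm A ^ 2)) ≤ μ) := by
  intro μ hμ x hx hxe
  subst hMdef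
  set u : Fin n → ℝ := x ∘ Sum.inl with hu
  set v : Fin m → ℝ := x ∘ Sum.inr with hv
  have hxel : x = Sum.elim u v := (Sum.elim_comp_inl_inr x).symm
  rw [hxel, fromBlocks_mulVec] at hxe
  have E1 : (-H) *ᵥ u + Aᵀ *ᵥ v = μ • u := by
    funext i
    have := congrFun hxe (Sum.inl i)
    simpa using this
  have E2 : A *ᵥ u + Rd *ᵥ v = μ • v := by
    funext i
    have := congrFun hxe (Sum.inr i)
    simpa using this
  set a := u ⬝ᵥ (H *ᵥ u) with ha
  set b := v ⬝ᵥ (Rd *ᵥ v) with hb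
  set c := u ⬝ᵥ (Aᵀ *ᵥ v) with hc
  set p := u ⬝ᵥ u with hp
  set q := v ⬝ᵥ v with hq
  have hE1 : -a + c = μ * p := by
    have := congrArg (fun w => u ⬝ᵥ w) E1
    simpa [dotProduct_add, neg_mulVec, dotProduct_neg, dotProduct_smul, smul_eq_mul,
      ha, hc, hp] using this
  have hE2 : c + b = μ * q := by
    have := congrArg (fun w => v ⬝ᵥ w) E2
    have hca : v ⬝ᵥ (A *ᵥ u) = c := by
      rw [hc, dotProduct_mulVec, ← mulVec_transpose, dotProduct_comm]
    simpa [dotProduct_add, dotProduct_smul, smul_eq_mul, hca, hb, hq] using this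
  have hp0 : 0 ≤ p := dotProduct_self_nonneg' u
  have hq0 : 0 ≤ q := dotProduct_self_nonneg' v
  have hpq : 0 < p + q := by
    have hsum : x ⬝ᵥ x = p + q := by
      rw [hp, hq, hu, hv]
      simp [dotProduct, Fintype.sum_sum_type]
    have h0 : x ⬝ᵥ x ≠ 0 := fun h0 => hx (dotProduct_self_eq_zero.mp h0)
    have : 0 ≤ x ⬝ᵥ x := Finset.sum_nonneg fun i _ => mul_self_nonneg _
    rw [← hsum]
    exact lt_of_le_of_ne this (Ne.symm h0)
  set lm := ⨅ i, hH.1.eigenvalues i with hlm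
  set hh := ⨆ i, hH.1.eigenvalues i with hhh
  set r := ⨅ i, hRd.1.eigenvalues i with hr
  set σ := specNorm A with hσdef
  have ha1 : lm * p ≤ a := rayleigh_ge hH.1 u
  have ha2 : a ≤ hh * p := rayleigh_le hH.1 u
  have hb1 : r * q ≤ b := rayleigh_ge hRd.1 v
  have hc2 : c^2 ≤ σ^2 * p * q := dot_A_bound A u v
  have hσ0 : 0 ≤ σ := specNorm_nonneg A
  have hr0 : 0 ≤ r := by
    cases isEmpty_or_nonempty (Fin m) with
    | inl h => rw [hr, Real.iInf_of_isEmpty]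
    | inr h =>
      obtain ⟨j, hj⟩ := exists_eq_ciInf_of_finite (f := hRd.1.eigenvalues)
      rw [hr, ← hj]
      exact (hRd.eigenvalues_pos j).le
  -- first bound
  have hcle : c ≤ μ * q := by
    have := mul_nonneg hr0 hq0
    linarith
  have part1 : μ ≤ -lm := by
    rcases eq_or_lt_of_le hp0 with hpz | hppos
    · -- p = 0
      have hu0 : u = 0 := dotProduct_self_eq_zero.mp hpz.symm
      have hqpos : 0 < q := by
        have : p = 0 := hpz.symm
        linarith
      have hv0 : v ≠ 0 := by
        intro h0
        rw [hq, h0] at hqpos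
        simp at hqpos
      haveI : Nonempty (Fin m) := by
        obtain ⟨j, -⟩ := Function.ne_iff.mp hv0
        exact ⟨j⟩
      have hrpos : 0 < r := by
        obtain ⟨j, hj⟩ := exists_eq_ciInf_of_finite (f := hRd.1.eigenvalues)
        rw [hr, ← hj]
        exact hRd.eigenvalues_pos j
      have hc0 : c = 0 := by rw [hc, hu0, zero_dotProduct]
      have h2 : μ * q < 0 := mul_neg_of_neg_of_pos hμ hqpos
      have h3 : 0 < r * q := mul_pos hrpos hqpos
      linarith
    · -- p > 0
      have hmuq : μ * q ≤ 0 := mul_nonpos_of_nonpos_of_nonneg hμ.le hq0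
      have : μ * p ≤ (-lm) * p := by
        have : (-lm) * p = -(lm * p) := by ring
        linarith
      exact (mul_le_mul_iff_of_pos_right hppos).mp this
  -- second bound
  set s := Real.sqrt p with hs
  set t := Real.sqrt q with ht
  have hs2 : s^2 = p := Real.sq_sqrt hp0
  have ht2 : t^2 = q := Real.sq_sqrt hq0
  have hs0 : 0 ≤ s := Real.sqrt_nonneg _
  have ht0 : 0 ≤ t := Real.sqrt_nonneg _
  set W := (hh + r)^2 + 4 * σ^2 with hW
  have hW0 : 0 ≤ W := by positivity
  have hWs : Real.sqrt W ^ 2 = W := Real.sq_sqrt hW0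
  have hWnn : 0 ≤ Real.sqrt W := Real.sqrt_nonneg _
  have hcl : -(σ * s * t) ≤ c := by
    apply neg_le_of_sq_le _ (by positivity)
    have hid : σ^2 * p * q = (σ * s * t)^2 := by rw [← hs2, ← ht2]; ring
    linarith
  have hCS : -(Real.sqrt W * (p + q)) ≤ (hh + r) * (q - p) - 4 * σ * s * t := by
    apply neg_le_of_sq_le _ (by positivity)
    have key : ((hh + r) * (q - p) - 4 * σ * s * t)^2 ≤ W * (p + q)^2 := by
      rw [← hs2, ← ht2, hW]
      nlinarith [sq_nonneg ((hh + r) * (2 * s * t) + 2 * σ * (t^2 - s^2))]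
    calc ((hh + r) * (q - p) - 4 * σ * s * t)^2 ≤ W * (p + q)^2 := key
      _ = (Real.sqrt W * (p + q))^2 := by rw [mul_pow, hWs]
  have part2 : (1/2) * ((r - hh) - Real.sqrt W) ≤ μ := by
    have final : ((1/2) * ((r - hh) - Real.sqrt W)) * (p + q) ≤ μ * (p + q) := by
      have expand : μ * (p + q) = -a + b + 2*c := by
        rw [mul_add, ← hE1, ← hE2]; ring
      rw [expand]
      nlinarith [ha2, hb1, hcl, hCS]
    exact (mul_le_mul_iff_of_pos_right hpq).mp final
  exact ⟨part1, part2⟩
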